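/- For any digit a ∈ {1,…,s−1}, the two s-adic codes (a,0,0,0,…) and (a−1,s−1,s−1,…) of the point a/s are mapped by f to the binary codes (i,1−i,i,1−i,…) and (j,1−j,j,…) respectively, where i = [a ∈ A₁] and j = [a−1 ∈ A₁]; both binary codes represent the same real number in [0,1]. -/

import Mathlib

open Set Filter

/-- Value of an `s`-adic code `α`: `∑ αₙ / sⁿ⁺¹`. -/
noncomputable def sval (s : ℕ) (α : ℕ → ℕ) : ℝ := ∑' n, (α n : ℝ) / (s : ℝ) ^ (n + 1)

/-- `α` is a sequence of digits in `{0, …, s−1}`. -/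
def isDigits (s : ℕ) (α : ℕ → ℕ) : Prop := ∀ n, α n < s

/-- The `s`-adic cylinder of rank `m` with base `c₀ … c_{m−1}`. -/
def cylinder (s m : ℕ) (c : ℕ → ℕ) : Set ℝ :=
  {x | ∃ α : ℕ → ℕ, isDigits s α ∧ (∀ i < m, α i = c i) ∧ x = sval s α}

/-- The sequence of output binary digits `βₙ`. -/
def betaSeq (A1 : Finset ℕ) (α : ℕ → ℕ) : ℕ → ℕ
  | 0 => if α 0 ∈ A1 then 1 else 0
  | n + 1 => if α (n + 1) = α n then betaSeq A1 α n else 1 - betaSeq A1 α n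

/-- for a digit `1 ≤ a ≤ s−1`, the two `s`-adic codes `(a,0,0,…)` and
`(a−1,s−1,s−1,…)` of the point `a/s` are mapped by the digit recursion to the binary
codes with first digit `i = [a ∈ A₁]` (resp. `j = [a−1 ∈ A₁]`) followed by the constant
digit `1−i` (resp. `1−j`), and both binary codes represent the same real number. -/
lemma betaSeq_succ_eq (A1 : Finset ℕ) (α : ℕ → ℕ) (n : ℕ) (h : α (n+1) = α n) :
    betaSeq A1 α (n+1) = betaSeq A1 α n := by rw [betaSeq, if_pos h]

lemma betaSeq_succ_ne (A1 : Finset ℕ) (α : ℕ → ℕ) (n : ℕ) (h : α (n+1) ≠ α n) :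
    betaSeq A1 α (n+1) = 1 - betaSeq A1 α n := by rw [betaSeq, if_neg h]

lemma pow_half (n : ℕ) : (1:ℝ)/2^(n+1) = (1/2) * (1/2)^n := by
  rw [pow_succ]; ring_nf; norm_num

lemma sval_aux (k : ℕ) (hk : k ≤ 1) :
    sval 2 (fun n => if n = 0 then k else 1 - k) = 1/2 := by
  unfold sval
  have hgeo : Summable (fun n : ℕ => (1:ℝ)/2^(n+1)) := by
    rw [show (fun n:ℕ => (1:ℝ)/2^(n+1)) = fun n => (1/2)*((1:ℝ)/2)^n from funext pow_half]
    exact (summable_geometric_of_lt_one (by norm_num) (by norm_num)).mul_left _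
  have hgeoval : ∑' n : ℕ, (1:ℝ)/2^(n+1) = 1 := by
    rw [show (fun n:ℕ => (1:ℝ)/2^(n+1)) = fun n => (1/2)*((1:ℝ)/2)^n from funext pow_half,
      tsum_mul_left, tsum_geometric_of_lt_one (by norm_num) (by norm_num)]
    norm_num
  interval_cases k
  · have hs : Summable (fun n : ℕ => (if n = 0 then (1:ℝ) else 0)/2^(n+1)) := by
      apply summable_of_ne_finset_zero (s := {0})
      intro n hn
      simp [Finset.mem_singleton.not.mp hn]
    have heq : (fun n : ℕ => ((if n = 0 then (0:ℕ) else 1 - 0 : ℕ) : ℝ)/(2:ℝ)^(n+1)) =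
        fun n => (1:ℝ)/2^(n+1) - (if n = 0 then (1:ℝ) else 0)/2^(n+1) := by
      funext n; rcases n with _|n <;> simp
    push_cast
    rw [show (fun n : ℕ => ((if n = 0 then (0:ℝ) else 1) / (2:ℝ)^(n+1))) =
      fun n => (1:ℝ)/2^(n+1) - (if n = 0 then (1:ℝ) else 0)/2^(n+1) by
        funext n; rcases n with _|n <;> simp]
    rw [Summable.tsum_sub hgeo hs, hgeoval]
    rw [tsum_eq_single 0 (by intro n hn; simp [hn])]
    norm_num
  · push_cast
    rw [tsum_eq_single 0 (by intro n hn; simp [hn])]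
    norm_num

theorem f_on_codes_of_binary_point (s : ℕ) (hs : 2 < s) (A0 A1 : Finset ℕ)
    (hA : A0 ∪ A1 = Finset.range s) (hdisj : Disjoint A0 A1)
    (h0 : A0.Nonempty) (h1 : A1.Nonempty)
    (a : ℕ) (ha1 : 1 ≤ a) (ha2 : a < s)
    (i j : ℕ) (hi : i = if a ∈ A1 then 1 else 0) (hj : j = if a - 1 ∈ A1 then 1 else 0) :
    betaSeq A1 (fun n => if n = 0 then a else 0) =
      (fun n => if n = 0 then i else 1 - i) ∧
    betaSeq A1 (fun n => if n = 0 then a - 1 else s - 1) =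
      (fun n => if n = 0 then j else 1 - j) ∧
    sval 2 (fun n => if n = 0 then i else 1 - i) =
      sval 2 (fun n => if n = 0 then j else 1 - j) := by
  have hi1 : i ≤ 1 := by rw [hi]; split <;> norm_num
  have hj1 : j ≤ 1 := by rw [hj]; split <;> norm_num
  refine ⟨funext fun n => ?_, funext fun n => ?_, by rw [sval_aux i hi1, sval_aux j hj1]⟩
  · induction n with
    | zero => simp [betaSeq, hi]
    | succ n ih =>
      rcases n with _|n
      · rw [betaSeq_succ_ne _ _ 0 (by simp; omega)]
        simp [betaSeq, hi]
      · rw [betaSeq_succ_eq _ _ (n+1) (by simp)]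
        rw [ih]; simp
  · induction n with
    | zero => simp [betaSeq, hj]
    | succ n ih =>
      rcases n with _|n
      · rw [betaSeq_succ_ne _ _ 0 (by simp; omega)]
        simp [betaSeq, hj]
      · rw [betaSeq_succ_eq _ _ (n+1) (by simp)]
        rw [ih]; simp
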